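/- For all real numbers x, y ∈ [-C, C], we have (1/2)·σ(C)(1-σ(C))·(y-x)² ≤ D(σ(x)‖σ(y)) ≤ (1/8)·(y-x)². -/

import Mathlib

noncomputable def logistic (x : ℝ) : ℝ := Real.exp x / (1 + Real.exp x)

noncomputable def klBer (p q : ℝ) : ℝ :=
  p * Real.log (p / q) + (1 - p) * Real.log ((1 - p) / (1 - q))

lemma one_add_exp_pos (t : ℝ) : 0 < 1 + Real.exp t := by positivity

lemma hasDerivAt_softplus (t : ℝ) :
    HasDerivAt (fun s => Real.log (1 + Real.exp s)) (logistic t) t := by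
  have h := ((Real.hasDerivAt_exp t).const_add 1).log (ne_of_gt (one_add_exp_pos t))
  simpa [logistic] using h

lemma hasDerivAt_logistic (t : ℝ) :
    HasDerivAt logistic (logistic t * (1 - logistic t)) t := by
  have h1 : (1 + Real.exp t) ≠ 0 := ne_of_gt (one_add_exp_pos t)
  have h := (Real.hasDerivAt_exp t).div ((Real.hasDerivAt_exp t).const_add 1) h1
  refine h.congr_deriv ?_
  unfold logistic
  field_simp

lemma logistic_deriv_eq (t : ℝ) :
    logistic t * (1 - logistic t) = Real.exp t / (1 + Real.exp t) ^ 2 := by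
  have h1 : (1 + Real.exp t) ≠ 0 := ne_of_gt (one_add_exp_pos t)
  unfold logistic
  field_simp
  ring

lemma logistic_deriv_le (t : ℝ) : logistic t * (1 - logistic t) ≤ 1 / 4 := by
  rw [logistic_deriv_eq]
  rw [div_le_iff₀ (by positivity)]
  nlinarith [sq_nonneg (1 - Real.exp t), Real.exp_pos t]

lemma logistic_deriv_ge (C t : ℝ) (ht : t ∈ Set.Icc (-C) C) :
    logistic C * (1 - logistic C) ≤ logistic t * (1 - logistic t) := by
  rw [logistic_deriv_eq, logistic_deriv_eq]
  have hu : Real.exp t = (Real.exp (t / 2)) ^ 2 := by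
    rw [pow_two, ← Real.exp_add]; ring_nf
  have hv : Real.exp C = (Real.exp (C / 2)) ^ 2 := by
    rw [pow_two, ← Real.exp_add]; ring_nf
  set u := Real.exp (t / 2) with hudef
  set v := Real.exp (C / 2) with hvdef
  have hup : 0 < u := Real.exp_pos _
  have hvp : 0 < v := Real.exp_pos _
  have huv : u ≤ v := Real.exp_le_exp.2 (by linarith [ht.2])
  have huv1 : 1 ≤ u * v := by
    rw [← Real.exp_add]
    exact Real.one_le_exp (by linarith [ht.1])
  rw [hu, hv, div_le_div_iff₀ (by positivity) (by positivity)]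
  nlinarith [mul_nonneg (mul_nonneg (sub_nonneg.2 huv) (sub_nonneg.2 huv1))
    (by positivity : (0:ℝ) ≤ u * (1 + v^2) + v * (1 + u^2))]

lemma logistic_sub_le (a b : ℝ) (hab : a ≤ b) : logistic b - logistic a ≤ (b - a) / 4 := by
  have hg : ∀ t : ℝ, HasDerivAt (fun s => s / 4 - logistic s) (1 / 4 - logistic t * (1 - logistic t)) t := by
    intro t
    exact (((hasDerivAt_id t).div_const 4).sub (hasDerivAt_logistic t)).congr_deriv (by norm_num)
  have hmono : Monotone (fun s => s / 4 - logistic s) := by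
    apply monotone_of_deriv_nonneg
    · exact fun t => (hg t).differentiableAt
    · intro t
      rw [(hg t).deriv]
      linarith [logistic_deriv_le t]
  have := hmono hab
  simp only at this
  linarith

lemma logistic_sub_ge (C a b : ℝ) (ha : a ∈ Set.Icc (-C) C) (hb : b ∈ Set.Icc (-C) C)
    (hab : a ≤ b) : logistic C * (1 - logistic C) * (b - a) ≤ logistic b - logistic a := by
  set m := logistic C * (1 - logistic C) with hm
  have hg : ∀ t : ℝ, HasDerivAt (fun s => logistic s - m * s) (logistic t * (1 - logistic t) - m) t := by
    intro t
    exact ((hasDerivAt_logistic t).sub ((hasDerivAt_id t).const_mul m)).congr_deriv (by ring)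
  have hmono : MonotoneOn (fun s => logistic s - m * s) (Set.Icc (-C) C) := by
    apply monotoneOn_of_deriv_nonneg (convex_Icc _ _)
    · exact fun t _ => (hg t).continuousAt.continuousWithinAt
    · exact fun t _ => (hg t).differentiableAt.differentiableWithinAt
    · intro t ht
      rw [(hg t).deriv]
      have ht' : t ∈ Set.Icc (-C) C := interior_subset ht
      linarith [logistic_deriv_ge C t ht']
  have := hmono ha hb hab
  simp only at this
  linarith

lemma bregman_upper (x y : ℝ) :
    Real.log (1 + Real.exp y) - Real.log (1 + Real.exp x) - logistic x * (y - x) ≤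
      (1 / 8) * (y - x) ^ 2 := by
  set ψ : ℝ → ℝ := fun t => 1/8 * (t - x)^2 + logistic x * t - Real.log (1 + Real.exp t) with hψdef
  have hψ : ∀ t : ℝ, HasDerivAt ψ (1/8 * (2 * (t - x)) + logistic x - logistic t) t := by
    intro t
    have h1 : HasDerivAt (fun s : ℝ => (s - x)^2) (2 * (t - x)) t := by
      exact (((hasDerivAt_id t).sub_const x).pow 2).congr_deriv (by norm_num)
    rw [hψdef]
    have h2 := ((h1.const_mul (1/8)).add ((hasDerivAt_id t).const_mul (logistic x))).sub
      (hasDerivAt_softplus t)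
    simp only [id_eq, mul_one] at h2
    exact h2
  have key : ψ x ≤ ψ y := by
    rcases le_total x y with h | h
    · have hmono : MonotoneOn ψ (Set.Icc x y) := by
        apply monotoneOn_of_deriv_nonneg (convex_Icc _ _)
        · exact fun t _ => (hψ t).continuousAt.continuousWithinAt
        · exact fun t _ => (hψ t).differentiableAt.differentiableWithinAt
        · intro t ht
          rw [(hψ t).deriv]
          rw [interior_Icc] at ht
          have := logistic_sub_le x t ht.1.le
          linarith
      exact hmono (Set.left_mem_Icc.2 h) (Set.right_mem_Icc.2 h) h
    · have hanti : AntitoneOn ψ (Set.Icc y x) := by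
        apply antitoneOn_of_deriv_nonpos (convex_Icc _ _)
        · exact fun t _ => (hψ t).continuousAt.continuousWithinAt
        · exact fun t _ => (hψ t).differentiableAt.differentiableWithinAt
        · intro t ht
          rw [(hψ t).deriv]
          rw [interior_Icc] at ht
          have : logistic x - logistic t ≤ (x - t) / 4 := logistic_sub_le t x ht.2.le
          linarith
      exact hanti (Set.left_mem_Icc.2 h) (Set.right_mem_Icc.2 h) h
  simp only [hψdef] at key
  nlinarith [key]

lemma bregman_lower (C x y : ℝ) (hx : x ∈ Set.Icc (-C) C) (hy : y ∈ Set.Icc (-C) C) :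
    (1 / 2) * logistic C * (1 - logistic C) * (y - x) ^ 2 ≤
      Real.log (1 + Real.exp y) - Real.log (1 + Real.exp x) - logistic x * (y - x) := by
  set m := logistic C * (1 - logistic C) with hm
  set φ : ℝ → ℝ := fun t => Real.log (1 + Real.exp t) - logistic x * t - m/2 * (t - x)^2 with hφdef
  have hφ : ∀ t : ℝ, HasDerivAt φ (logistic t - logistic x - m/2 * (2 * (t - x))) t := by
    intro t
    have h1 : HasDerivAt (fun s : ℝ => (s - x)^2) (2 * (t - x)) t := by
      exact (((hasDerivAt_id t).sub_const x).pow 2).congr_deriv (by norm_num)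
    rw [hφdef]
    exact (((hasDerivAt_softplus t).sub ((hasDerivAt_id t).const_mul (logistic x))).sub
      (h1.const_mul (m/2))).congr_deriv (by ring)
  have key : φ x ≤ φ y := by
    rcases le_total x y with h | h
    · have hsub : Set.Icc x y ⊆ Set.Icc (-C) C := Set.Icc_subset_Icc hx.1 hy.2
      have hmono : MonotoneOn φ (Set.Icc x y) := by
        apply monotoneOn_of_deriv_nonneg (convex_Icc _ _)
        · exact fun t _ => (hφ t).continuousAt.continuousWithinAt
        · exact fun t _ => (hφ t).differentiableAt.differentiableWithinAt
        · intro t ht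
          rw [(hφ t).deriv]
          rw [interior_Icc] at ht
          have ht' : t ∈ Set.Icc (-C) C := hsub ⟨ht.1.le, ht.2.le⟩
          have := logistic_sub_ge C x t hx ht' ht.1.le
          rw [← hm] at this
          linarith
      exact hmono (Set.left_mem_Icc.2 h) (Set.right_mem_Icc.2 h) h
    · have hsub : Set.Icc y x ⊆ Set.Icc (-C) C := Set.Icc_subset_Icc hy.1 hx.2
      have hanti : AntitoneOn φ (Set.Icc y x) := by
        apply antitoneOn_of_deriv_nonpos (convex_Icc _ _)
        · exact fun t _ => (hφ t).continuousAt.continuousWithinAt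
        · exact fun t _ => (hφ t).differentiableAt.differentiableWithinAt
        · intro t ht
          rw [(hφ t).deriv]
          rw [interior_Icc] at ht
          have ht' : t ∈ Set.Icc (-C) C := hsub ⟨ht.1.le, ht.2.le⟩
          have := logistic_sub_ge C t x ht' hx ht.2.le
          rw [← hm] at this
          linarith
      exact hanti (Set.left_mem_Icc.2 h) (Set.right_mem_Icc.2 h) h
  simp only [hφdef] at key
  nlinarith [key]

lemma klBer_logistic_eq (x y : ℝ) :
    klBer (logistic x) (logistic y) =
      Real.log (1 + Real.exp y) - Real.log (1 + Real.exp x) - logistic x * (y - x) := by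
  have hx1 : (0:ℝ) < 1 + Real.exp x := one_add_exp_pos x
  have hy1 : (0:ℝ) < 1 + Real.exp y := one_add_exp_pos y
  have hex : (0:ℝ) < Real.exp x := Real.exp_pos x
  have hey : (0:ℝ) < Real.exp y := Real.exp_pos y
  have h1 : logistic x / logistic y =
      Real.exp x * (1 + Real.exp y) / ((1 + Real.exp x) * Real.exp y) := by
    unfold logistic
    field_simp
  have h2 : Real.log (logistic x / logistic y) =
      x + Real.log (1 + Real.exp y) - (Real.log (1 + Real.exp x) + y) := by
    rw [h1, Real.log_div (by positivity) (by positivity), Real.log_mul (by positivity) (by positivity),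
      Real.log_mul (by positivity) (by positivity), Real.log_exp, Real.log_exp]
  have h3x : 1 - logistic x = 1 / (1 + Real.exp x) := by
    unfold logistic; field_simp; ring
  have h3y : 1 - logistic y = 1 / (1 + Real.exp y) := by
    unfold logistic; field_simp; ring
  have h4 : Real.log ((1 - logistic x) / (1 - logistic y)) =
      Real.log (1 + Real.exp y) - Real.log (1 + Real.exp x) := by
    rw [h3x, h3y, Real.log_div (by positivity) (by positivity), one_div, one_div,
      Real.log_inv, Real.log_inv]
    ring
  unfold klBer
  rw [h2, h4]
  ring

theorem stmt_7 (C : ℝ) (hC : 0 < C) (x y : ℝ)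
    (hx : x ∈ Set.Icc (-C) C) (hy : y ∈ Set.Icc (-C) C) :
    (1 / 2) * logistic C * (1 - logistic C) * (y - x) ^ 2 ≤
      klBer (logistic x) (logistic y) ∧
    klBer (logistic x) (logistic y) ≤ (1 / 8) * (y - x) ^ 2 := by
  rw [klBer_logistic_eq]
  exact ⟨bregman_lower C x y hx hy, bregman_upper x y⟩
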